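/- For all integers n, m ≥ 1 and every natural number t, the following identity holds in ℚ: ∑_{k+l=t, k,l ≥ 0} (n/(n+2k)) · C(n+2k, k) · (m/(m+2l)) · C(m+2l, l) = ((n+m)/(n+m+2t)) · C(n+m+2t, t). (This is a particular case of the generalized Vandermonde, or Rothe, identity.) -/

import Mathlib

open Finset

private def bb (n t : ℕ) : ℚ := n / (n + 2 * t) * ((n + 2 * t).choose t)

private lemma bb_zero_left (t : ℕ) : bb 0 t = 0 := by
  simp [bb]

private lemma bb_zero_right (n : ℕ) (hn : 1 ≤ n) : bb n 0 = 1 := by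
  have : (n : ℚ) ≠ 0 := by positivity
  simp [bb, this]

private lemma bb_rec (n t : ℕ) : bb (n+1) (t+1) = bb n (t+1) + bb (n+2) t := by
  have h1 : (n+1) + 2*(t+1) = (n + 2*t + 2) + 1 := by ring
  have h2 : n + 2*(t+1) = n + 2*t + 2 := by ring
  have h3 : (n+2) + 2*t = n + 2*t + 2 := by ring
  set N := n + 2*t + 2 with hN
  unfold bb
  rw [h1, h2, h3]
  have hpascal : (N+1).choose (t+1) = N.choose t + N.choose (t+1) :=
    Nat.choose_succ_succ N t
  have hsub : N - t = n + t + 2 := by omega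
  have hA : ((N.choose (t+1) : ℚ)) * (t+1) = (N.choose t) * (n + t + 2) := by
    have := Nat.choose_succ_right_eq N t
    rw [hsub] at this
    exact_mod_cast congrArg (Nat.cast : ℕ → ℚ) this
  have hNQ : ((N : ℚ)) = n + 2*t + 2 := by push_cast [hN]; ring
  have hN0 : (N : ℚ) ≠ 0 := by rw [hNQ]; positivity
  have hN10 : ((N : ℚ) + 1) ≠ 0 := by rw [hNQ]; positivity
  rw [hpascal]
  push_cast
  field_simp
  linear_combination (2*((n:ℚ)+2*t+2)) * hA

private def SS (n m t : ℕ) : ℚ := ∑ i ∈ Finset.range (t+1), bb n i * bb m (t - i)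

private lemma SS_zero_left (m t : ℕ) : SS 0 m t = 0 := by
  simp [SS, bb_zero_left]

private lemma SS_zero_t (n m : ℕ) : SS n m 0 = bb n 0 * bb m 0 := by
  simp [SS]

private lemma SS_rec (n m t : ℕ) :
    SS (n+1) m (t+1) =
      (bb (n+1) 0 - bb n 0) * bb m (t+1) + SS n m (t+1) + SS (n+2) m t := by
  unfold SS
  rw [Finset.sum_range_succ' (fun i => bb (n+1) i * bb m (t+1-i)) (t+1),
      Finset.sum_range_succ' (fun i => bb n i * bb m (t+1-i)) (t+1)]
  simp only [Nat.sub_zero]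
  have : ∀ i ∈ Finset.range (t+1),
      bb (n+1) (i+1) * bb m (t+1-(i+1)) =
        bb n (i+1) * bb m (t+1-(i+1)) + bb (n+2) i * bb m (t - i) := by
    intro i _
    have h : t+1-(i+1) = t - i := by omega
    rw [h, bb_rec n i]
    ring
  rw [Finset.sum_congr rfl this, Finset.sum_add_distrib]
  ring

private lemma main_conv : ∀ t n m : ℕ, 1 ≤ n → 1 ≤ m → SS n m t = bb (n+m) t := by
  intro t
  induction t using Nat.strong_induction_on with
  | _ t IH =>
    intro n m hn hm
    induction n, hn using Nat.le_induction with
    | base =>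
      match t with
      | 0 => rw [SS_zero_t, bb_zero_right 1 le_rfl, bb_zero_right m hm,
                 bb_zero_right (1+m) (by omega), one_mul]
      | (t'+1) =>
        rw [show (1:ℕ) = 0 + 1 from rfl, SS_rec, SS_zero_left,
            IH t' (Nat.lt_succ_self t') 2 m (by norm_num) hm,
            bb_zero_right 1 le_rfl, bb_zero_left]
        have := bb_rec m t'
        rw [show 2 + m = m + 2 by ring, show t' + (0+1) = t' + 1 from rfl, show (1:ℕ) + m = m + 1 by ring] at *
        rw [this]
        ring
    | succ n hn IH2 =>
      match t with
      | 0 => rw [SS_zero_t, bb_zero_right (n+1) (by omega), bb_zero_right m hm,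
                 bb_zero_right (n+1+m) (by omega), one_mul]
      | (t'+1) =>
        rw [SS_rec, IH2, IH t' (Nat.lt_succ_self t') (n+2) m (by omega) hm,
            bb_zero_right (n+1) (by omega), bb_zero_right n hn]
        have := bb_rec (n+m) t'
        rw [show n+1+m = n+m+1 by ring, show n+2+m = n+m+2 by ring, this]
        ring

/-- A particular case of the generalized Vandermonde (Rothe) identity: for `n, m ≥ 1`
and `t ∈ ℕ`,
`∑_{k+l=t} (n/(n+2k)) C(n+2k,k) (m/(m+2l)) C(m+2l,l) = ((n+m)/(n+m+2t)) C(n+m+2t,t)`. -/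
theorem rothe_identity (n m : ℕ) (hn : 1 ≤ n) (hm : 1 ≤ m) (t : ℕ) :
    ∑ p ∈ Finset.HasAntidiagonal.antidiagonal t,
        ((n : ℚ) / (n + 2 * p.1)) * ((n + 2 * p.1).choose p.1) *
          (((m : ℚ) / (m + 2 * p.2)) * ((m + 2 * p.2).choose p.2)) =
      ((n + m : ℚ) / (n + m + 2 * t)) * ((n + m + 2 * t).choose t) := by
  have key := main_conv t n m hn hm
  rw [SS] at key
  rw [Finset.Nat.sum_antidiagonal_eq_sum_range_succ_mk]
  have h1 : ∀ a b : ℕ, ((n : ℚ) / (n + 2 * a)) * ((n + 2 * a).choose a) *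
          (((m : ℚ) / (m + 2 * b)) * ((m + 2 * b).choose b)) = bb n a * bb m b := by
    intro a b
    unfold bb
    ring
  simp only [h1]
  rw [key]
  unfold bb
  push_cast
  ring
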